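/- Let |~ be a loop-cumulative consequence relation and 𝓜 = (S,l,≺) its canonical model. Then the transitive closure ≺⁺ of ≺ is irreflexive, hence a strict partial order, so (S,l,≺⁺) is a conceptual cumulative ordered model. -/

import Mathlib

namespace DR

/-- Formulas of the lattice-based language 𝓛: variables, ⊥, ⊤, ∧, ∨. -/
inductive Fm : Type where
  | var : ℕ → Fm
  | bot : Fm
  | top : Fm
  | and : Fm → Fm → Fm
  | or  : Fm → Fm → Fm

/-- A polarity (formal context) (A, X, I). -/
structure Polarity : Type 1 where
  Obj : Type
  Feat : Type
  I : Obj → Feat → Prop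

namespace Polarity

variable (P : Polarity)

def up (B : Set P.Obj) : Set P.Feat := {x | ∀ b ∈ B, P.I b x}
def dn (Y : Set P.Feat) : Set P.Obj := {a | ∀ y ∈ Y, P.I a y}

lemma subset_dn_up (B : Set P.Obj) : B ⊆ P.dn (P.up B) :=
  fun _ ha _ hx => hx _ ha

lemma subset_up_dn (Y : Set P.Feat) : Y ⊆ P.up (P.dn Y) :=
  fun _ hx _ ha => ha _ hx

lemma up_anti {B C : Set P.Obj} (h : B ⊆ C) : P.up C ⊆ P.up B :=
  fun _ hx b hb => hx b (h hb)

lemma dn_anti {Y Z : Set P.Feat} (h : Y ⊆ Z) : P.dn Z ⊆ P.dn Y :=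
  fun _ ha y hy => ha y (h hy)

end Polarity

/-- A formal concept of a polarity: a Galois-stable pair (extension, intension). -/
structure Concept (P : Polarity) : Type where
  ext : Set P.Obj
  int : Set P.Feat
  up_ext : P.up ext = int
  dn_int : P.dn int = ext

namespace Concept

variable {P : Polarity}

/-- Lattice meet of concepts: extensions intersect. -/
def meet (c d : Concept P) : Concept P where
  ext := c.ext ∩ d.ext
  int := P.up (c.ext ∩ d.ext)
  up_ext := rfl
  dn_int := by
    apply Set.Subset.antisymm
    · intro a ha
      constructor
      · rw [← c.dn_int]
        intro y hy
        apply ha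
        rw [← c.up_ext] at hy
        exact P.up_anti Set.inter_subset_left hy
      · rw [← d.dn_int]
        intro y hy
        apply ha
        rw [← d.up_ext] at hy
        exact P.up_anti Set.inter_subset_right hy
    · exact P.subset_dn_up _

/-- Lattice join of concepts: intensions intersect. -/
def join (c d : Concept P) : Concept P where
  ext := P.dn (c.int ∩ d.int)
  int := c.int ∩ d.int
  up_ext := by
    apply Set.Subset.antisymm
    · intro x hx
      constructor
      · rw [← c.up_ext]
        intro b hb
        apply hx
        rw [← c.dn_int] at hb
        exact P.dn_anti Set.inter_subset_left hb
      · rw [← d.up_ext]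
        intro b hb
        apply hx
        rw [← d.dn_int] at hb
        exact P.dn_anti Set.inter_subset_right hb
    · exact P.subset_up_dn _
  dn_int := rfl

/-- The greatest concept. -/
def top (P : Polarity) : Concept P where
  ext := Set.univ
  int := P.up Set.univ
  up_ext := rfl
  dn_int := Set.eq_univ_of_univ_subset (P.subset_dn_up _)

/-- The least concept. -/
def bot (P : Polarity) : Concept P where
  ext := P.dn Set.univ
  int := Set.univ
  up_ext := Set.eq_univ_of_univ_subset (P.subset_up_dn _)
  dn_int := rfl

end Concept

/-- A polarity-based model: a polarity with a valuation of variables into concepts. -/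
structure Model : Type 1 where
  P : Polarity
  V : ℕ → Concept P

namespace Model

/-- Homomorphic extension of the valuation to all formulas. -/
def interp (M : Model) : Fm → Concept M.P
  | .var n => M.V n
  | .bot => Concept.bot M.P
  | .top => Concept.top M.P
  | .and φ ψ => Concept.meet (M.interp φ) (M.interp ψ)
  | .or φ ψ => Concept.join (M.interp φ) (M.interp ψ)

/-- M, a ⊩ φ : the object a is in the extension of φ. -/
def objSat (M : Model) (a : M.P.Obj) (φ : Fm) : Prop := a ∈ (M.interp φ).ext

/-- M, x ≻ φ : the feature x is in the intension of φ. -/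
def featSat (M : Model) (x : M.P.Feat) (φ : Fm) : Prop := x ∈ (M.interp φ).int

end Model

/-- Validity of the sequent φ ⊢ ψ: in every polarity-based model the
extension of φ is contained in the extension of ψ. -/
def SeqValid (φ ψ : Fm) : Prop :=
  ∀ M : Model, (M.interp φ).ext ⊆ (M.interp ψ).ext

/-- A conceptual cumulative consequence relation: reflexive and closed
under (LLE), (RW), (CM) and (Cut). -/
structure IsCumulative (R : Fm → Fm → Prop) : Prop where
  refl : ∀ φ, R φ φ
  lle : ∀ φ ψ χ, SeqValid φ ψ → SeqValid ψ φ → R φ χ → R ψ χ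
  rw : ∀ φ ψ χ, SeqValid φ ψ → R χ φ → R χ ψ
  cm : ∀ φ ψ χ, R φ ψ → R φ χ → R (Fm.and φ ψ) χ
  cut : ∀ φ ψ χ, R (Fm.and φ ψ) χ → R φ ψ → R φ χ

/-- Closure under the rule (Loop). -/
def LoopClosed (R : Fm → Fm → Prop) : Prop :=
  ∀ (n : ℕ) (φ : ℕ → Fm),
    (∀ i < n, R (φ i) (φ (i + 1))) → R (φ n) (φ 0) → R (φ 0) (φ n)

/-- A pointed polarity-based model. -/
structure PointedModel : Type 1 where
  M : Model
  pt : M.P.Obj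

/-- Satisfaction at a pointed model. -/
def PointedModel.sat (Ma : PointedModel) (φ : Fm) : Prop := Ma.M.objSat Ma.pt φ

/-- A pointed model is normal for φ iff it satisfies every plausible consequence of φ. -/
def NormalFor (R : Fm → Fm → Prop) (Ma : PointedModel) (φ : Fm) : Prop :=
  ∀ ψ, R φ ψ → Ma.sat ψ

/-- A pointed model is supernormal for φ. -/
def SupernormalFor (R : Fm → Fm → Prop) (Ma : PointedModel) (φ : Fm) : Prop :=
  ∀ ψ, R φ ψ ↔ Ma.sat ψ

/-- A frame (S, l, ≺): states labelled by sets of pointed polarity-based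
models with a preference relation. -/
structure Frame : Type 2 where
  S : Type
  l : S → Set PointedModel
  prec : S → S → Prop

/-- t is minimal in P (w.r.t. prec). -/
def MinimalIn {α : Type _} (prec : α → α → Prop) (P : Set α) (t : α) : Prop :=
  t ∈ P ∧ ∀ s ∈ P, ¬ prec s t

/-- t is a minimum of P (w.r.t. prec). -/
def IsMinimum {α : Type _} (prec : α → α → Prop) (P : Set α) (t : α) : Prop :=
  t ∈ P ∧ ∀ s ∈ P, s ≠ t → prec t s

/-- P is smooth (w.r.t. prec). -/
def Smooth {α : Type _} (prec : α → α → Prop) (P : Set α) : Prop :=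
  ∀ t ∈ P, MinimalIn prec P t ∨ ∃ s, MinimalIn prec P s ∧ prec s t

namespace Frame

/-- s ⊨ φ : every pointed model in l(s) satisfies φ. -/
def stateSat (F : Frame) (s : F.S) (φ : Fm) : Prop :=
  ∀ Ma ∈ F.l s, Ma.sat φ

/-- φ̂ : the set of states satisfying φ. -/
def hat (F : Frame) (φ : Fm) : Set F.S := {s | F.stateSat s φ}

/-- A conceptual cumulative model: φ̂ is smooth for every φ. -/
def IsCumulativeModel (F : Frame) : Prop :=
  ∀ φ : Fm, Smooth F.prec (F.hat φ)

/-- The consequence relation |~_𝓜 defined by a frame: every state minimal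
in φ̂ belongs to ψ̂. -/
def conseq (F : Frame) (φ ψ : Fm) : Prop :=
  ∀ s, MinimalIn F.prec (F.hat φ) s → s ∈ F.hat ψ

/-- Replace the preference relation of a frame. -/
def withPrec (F : Frame) (p : F.S → F.S → Prop) : Frame := ⟨F.S, F.l, p⟩

end Frame

/-- The equivalence class φ/∼ of φ under ∼ (φ ∼ ψ iff φ |~ ψ and ψ |~ φ). -/
def cls (R : Fm → Fm → Prop) (φ : Fm) : Set Fm := {ψ | R φ ψ ∧ R ψ φ}

/-- φ/∼ ≤ ψ/∼ : there is χ ∈ φ/∼ with ψ |~ χ (ψ any representative of ψ/∼). -/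
def clsLE (R : Fm → Fm → Prop) (C D : Set Fm) : Prop :=
  ∃ χ ∈ C, ∃ ψ ∈ D, R ψ χ

/-- The canonical model of a consequence relation: states are the
equivalence classes φ/∼, labelled by the normal pointed models for φ,
with φ/∼ ≺ ψ/∼ iff φ/∼ ≤ ψ/∼ and φ/∼ ≠ ψ/∼. -/
def canonicalFrame (R : Fm → Fm → Prop) : Frame where
  S := {C : Set Fm // ∃ φ, C = cls R φ}
  l := fun s => {Ma | ∃ φ, s.val = cls R φ ∧ NormalFor R Ma φ}
  prec := fun s t => clsLE R s.val t.val ∧ s ≠ t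

/-- The state φ/∼ of the canonical model. -/
def canonicalState (R : Fm → Fm → Prop) (φ : Fm) : (canonicalFrame R).S :=
  ⟨cls R φ, φ, rfl⟩



section Aux

open Relation

variable {R : Fm → Fm → Prop}

/-! ### Sequent validity basics -/

lemma seq_refl (φ : Fm) : SeqValid φ φ := fun _ => Set.Subset.rfl

lemma seq_trans {φ ψ χ : Fm} (h1 : SeqValid φ ψ) (h2 : SeqValid ψ χ) :
    SeqValid φ χ := fun M => (h1 M).trans (h2 M)

lemma interp_and (M : Model) (φ ψ : Fm) :
    M.interp (Fm.and φ ψ) = Concept.meet (M.interp φ) (M.interp ψ) := rfl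

lemma interp_or (M : Model) (φ ψ : Fm) :
    M.interp (Fm.or φ ψ) = Concept.join (M.interp φ) (M.interp ψ) := rfl

lemma seq_and_left (φ ψ : Fm) : SeqValid (Fm.and φ ψ) φ :=
  fun _ _ ha => ha.1

lemma seq_and_right (φ ψ : Fm) : SeqValid (Fm.and φ ψ) ψ :=
  fun _ _ ha => ha.2

lemma seq_and_intro {φ α β : Fm} (h1 : SeqValid φ α) (h2 : SeqValid φ β) :
    SeqValid φ (Fm.and α β) := fun M _ ha => ⟨h1 M ha, h2 M ha⟩

lemma seq_top (φ : Fm) : SeqValid φ Fm.top := fun _ _ _ => trivial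

lemma seq_bot (φ : Fm) : SeqValid Fm.bot φ := by
  intro M a ha
  rw [← (M.interp φ).dn_int]
  exact fun y _ => ha y trivial

/-- Intensions are antitone in extensions. -/
lemma int_anti {P : Polarity} {c d : Concept P} (h : c.ext ⊆ d.ext) :
    d.int ⊆ c.int := by
  rw [← c.up_ext, ← d.up_ext]
  exact P.up_anti h

lemma seq_or_left (φ ψ : Fm) : SeqValid φ (Fm.or φ ψ) := by
  intro M a ha
  rw [← (M.interp φ).dn_int] at ha
  exact fun y hy => ha y hy.1

lemma seq_or_right (φ ψ : Fm) : SeqValid ψ (Fm.or φ ψ) := by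
  intro M a ha
  rw [← (M.interp ψ).dn_int] at ha
  exact fun y hy => ha y hy.2

lemma seq_or_elim {φ ψ χ : Fm} (h1 : SeqValid φ χ) (h2 : SeqValid ψ χ) :
    SeqValid (Fm.or φ ψ) χ := by
  intro M a ha
  rw [← (M.interp χ).dn_int]
  intro y hy
  exact ha y ⟨int_anti (h1 M) hy, int_anti (h2 M) hy⟩

/-- Two concepts with the same extension coincide. -/
lemma Concept.ext_inj {P : Polarity} {c d : Concept P} (he : c.ext = d.ext) :
    c = d := by
  obtain ⟨ce, ci, hcu, hcd⟩ := c
  obtain ⟨de, di, hdu, hdd⟩ := d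
  simp only at he
  subst he
  have : ci = di := hcu.symm.trans hdu
  subst this
  rfl

/-- Two concepts with the same intension coincide. -/
lemma Concept.int_inj {P : Polarity} {c d : Concept P} (he : c.int = d.int) :
    c = d := by
  obtain ⟨ce, ci, hcu, hcd⟩ := c
  obtain ⟨de, di, hdu, hdd⟩ := d
  simp only at he
  subst he
  have : ce = de := hcd.symm.trans hdd
  subst this
  rfl

/-! ### Consequences of cumulativity -/

variable (h : IsCumulative R)
include h

/-- The rule (And) is derivable. -/
lemma R_and {φ α β : Fm} (h1 : R φ α) (h2 : R φ β) : R φ (Fm.and α β) := by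
  have s1 : R (Fm.and φ α) β := h.cm φ α β h1 h2
  have s2 : R (Fm.and (Fm.and φ α) β) (Fm.and α β) :=
    h.rw _ _ _ (seq_and_intro (seq_trans (seq_and_left _ _) (seq_and_right _ _))
      (seq_and_right _ _)) (h.refl _)
  exact h.cut φ α (Fm.and α β) (h.cut (Fm.and φ α) β (Fm.and α β) s2 s1) h1

/-- Reciprocity: equivalent formulas have the same consequences. -/
lemma recip {φ ψ χ : Fm} (h1 : R φ ψ) (h2 : R ψ φ) (h3 : R φ χ) : R ψ χ := by
  have c1 : R (Fm.and φ ψ) χ := h.cm φ ψ χ h1 h3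
  have c2 : R (Fm.and ψ φ) χ :=
    h.lle _ _ _ (seq_and_intro (seq_and_right _ _) (seq_and_left _ _))
      (seq_and_intro (seq_and_right _ _) (seq_and_left _ _)) c1
  exact h.cut ψ φ χ c2 h2

lemma mem_cls_self (φ : Fm) : φ ∈ cls R φ := ⟨h.refl φ, h.refl φ⟩

lemma cls_eq_of {φ ψ : Fm} (h1 : R φ ψ) (h2 : R ψ φ) : cls R φ = cls R ψ := by
  ext χ
  constructor
  · rintro ⟨a, b⟩
    exact ⟨recip h h1 h2 a, recip h a b h1⟩
  · rintro ⟨a, b⟩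
    exact ⟨recip h h2 h1 a, recip h a b h2⟩

lemma cls_eq_elim {φ ψ : Fm} (he : cls R φ = cls R ψ) : R φ ψ ∧ R ψ φ := by
  have : ψ ∈ cls R φ := he ▸ mem_cls_self h ψ
  exact this

/-! ### The supernormal (characteristic) pointed model for ψ -/

/-- The polarity of the characteristic model for ψ: objects are formulas
plus one extra point, features are formulas. -/
def snP (R : Fm → Fm → Prop) (ψ : Fm) : Polarity where
  Obj := Option Fm
  Feat := Fm
  I o χ := match o with
    | some φ => SeqValid φ χ
    | none => R ψ χ

omit h in
lemma snP_I_some (ψ φ χ : Fm) : (snP R ψ).I (some φ) χ = SeqValid φ χ := rfl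

omit h in
lemma snP_I_none (ψ χ : Fm) : (snP R ψ).I none χ = R ψ χ := rfl

/-- The canonical concept of a formula in the characteristic polarity. -/
def snC (ψ χ : Fm) : Concept (snP R ψ) where
  ext := {o | (snP R ψ).I o χ}
  int := {δ | SeqValid χ δ}
  up_ext := by
    ext δ
    constructor
    · intro hδ
      exact hδ (some χ) (seq_refl χ)
    · intro hδ o ho
      match o with
      | some φ => exact seq_trans ho hδ
      | none => exact h.rw _ _ _ hδ ho
  dn_int := by
    ext o
    constructor
    · intro ho
      exact ho χ (seq_refl χ)
    · intro ho δ hδ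
      match o with
      | some φ => exact seq_trans ho hδ
      | none => exact h.rw _ _ _ hδ ho

/-- The characteristic model for ψ. -/
def snM (ψ : Fm) : Model where
  P := snP R ψ
  V := fun n => snC h ψ (Fm.var n)

lemma snM_interp (ψ : Fm) : ∀ χ, (snM h ψ).interp χ = snC h ψ χ := by
  intro χ
  induction χ with
  | var n => rfl
  | bot =>
    apply Concept.int_inj
    show Set.univ = {δ | SeqValid Fm.bot δ}
    exact (Set.eq_univ_of_forall (fun δ => seq_bot δ)).symm
  | top =>
    apply Concept.ext_inj
    show Set.univ = {o | (snP R ψ).I o Fm.top}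
    refine (Set.eq_univ_of_forall ?_).symm
    intro o
    match o with
    | some φ => exact seq_top φ
    | none => exact h.rw _ _ _ (seq_top ψ) (h.refl ψ)
  | and α β ihα ihβ =>
    show Concept.meet _ _ = _
    rw [ihα, ihβ]
    apply Concept.ext_inj
    show {o | (snP R ψ).I o α} ∩ {o | (snP R ψ).I o β} = {o | (snP R ψ).I o (Fm.and α β)}
    ext o
    match o with
    | some φ =>
      exact ⟨fun ⟨a, b⟩ => seq_and_intro a b,
        fun hφ => ⟨seq_trans hφ (seq_and_left _ _), seq_trans hφ (seq_and_right _ _)⟩⟩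
    | none =>
      exact ⟨fun ⟨a, b⟩ => R_and h a b,
        fun hφ => ⟨h.rw _ _ _ (seq_and_left _ _) hφ, h.rw _ _ _ (seq_and_right _ _) hφ⟩⟩
  | or α β ihα ihβ =>
    show Concept.join _ _ = _
    rw [ihα, ihβ]
    apply Concept.int_inj
    show {δ | SeqValid α δ} ∩ {δ | SeqValid β δ} = {δ | SeqValid (Fm.or α β) δ}
    ext δ
    exact ⟨fun ⟨a, b⟩ => seq_or_elim a b,
      fun hδ => ⟨seq_trans (seq_or_left _ _) hδ, seq_trans (seq_or_right _ _) hδ⟩⟩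

/-- The characteristic pointed model for ψ. -/
def snPM (ψ : Fm) : PointedModel where
  M := snM h ψ
  pt := (none : Option Fm)

lemma snPM_sat (ψ χ : Fm) : (snPM h ψ).sat χ ↔ R ψ χ := by
  show (none : Option Fm) ∈ ((snM h ψ).interp χ).ext ↔ R ψ χ
  rw [snM_interp h ψ χ]
  exact Iff.rfl

lemma snPM_normal (ψ : Fm) : NormalFor R (snPM h ψ) ψ :=
  fun χ hχ => (snPM_sat h ψ χ).mpr hχ

/-! ### The truth lemma for the canonical frame -/

lemma stateSat_iff {s : (canonicalFrame R).S} {ψ : Fm} (hs : s.val = cls R ψ)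
    (φ : Fm) : (canonicalFrame R).stateSat s φ ↔ R ψ φ := by
  constructor
  · intro hsat
    exact (snPM_sat h ψ φ).mp (hsat (snPM h ψ) ⟨ψ, hs, snPM_normal h ψ⟩)
  · rintro hRψφ Ma ⟨χ, hχ, hnorm⟩
    have hcc : cls R ψ = cls R χ := hs ▸ hχ
    obtain ⟨a, b⟩ := cls_eq_elim h hcc
    exact hnorm φ (recip h a b hRψφ)

/-- Normalized representatives along an edge of the canonical frame. -/
lemma prec_reps {s t : (canonicalFrame R).S} (hp : (canonicalFrame R).prec s t) :
    ∃ φ ψ, s.val = cls R φ ∧ t.val = cls R ψ ∧ R ψ φ := by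
  obtain ⟨χ, hχ, ψ', hψ', hR⟩ := hp.1
  obtain ⟨φ₀, hφ₀⟩ := s.prop
  obtain ⟨ψ₀, hψ₀⟩ := t.prop
  rw [hφ₀] at hχ
  rw [hψ₀] at hψ'
  refine ⟨χ, ψ', ?_, ?_, hR⟩
  · rw [hφ₀, cls_eq_of h hχ.1 hχ.2]
  · rw [hψ₀, cls_eq_of h hψ'.1 hψ'.2]

/-- Walking backwards along a ≺-path yields a |~-chain of representatives. -/
lemma back_chain {u s : (canonicalFrame R).S}
    (hp : Relation.ReflTransGen (canonicalFrame R).prec u s) :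
    ∀ δ, s.val = cls R δ →
      ∃ γ, u.val = cls R γ ∧ Relation.ReflTransGen (fun a b => R b a) γ δ := by
  induction hp using Relation.ReflTransGen.head_induction_on with
  | refl => exact fun δ hδ => ⟨δ, hδ, Relation.ReflTransGen.refl⟩
  | head he _ ih =>
    intro δ hδ
    obtain ⟨γ', hc, hch⟩ := ih δ hδ
    obtain ⟨φ, ψ', ha, hcval, hR⟩ := prec_reps h he
    have hcc : cls R ψ' = cls R γ' := hcval ▸ hc
    obtain ⟨x, y⟩ := cls_eq_elim h hcc
    exact ⟨φ, ha, Relation.ReflTransGen.head (recip h x y hR) hch⟩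

/-! ### The Loop rule along chains -/

omit h in
lemma loop_flip (hl : LoopClosed R) {a b : Fm}
    (hc : Relation.ReflTransGen (fun x y => R y x) a b) (hab : R a b) : R b a := by
  obtain ⟨l, hchain, hlast⟩ := List.exists_isChain_cons_of_relationReflTransGen hc
  set l0 : List Fm := a :: l with hl0
  set n : ℕ := l.length with hn
  have hl0len : l0.length = n + 1 := rfl
  set f : ℕ → Fm := fun i => l0.getD (n - i) a with hf
  have hc' := List.isChain_iff_getElem.mp hchain
  have hstep : ∀ j, j < n → R (l0.getD (j + 1) a) (l0.getD j a) := by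
    intro j hj
    have hj1 : j + 1 < l0.length := by simp [hl0len]; omega
    have hjl : j < l.length := hj
    have hj0 : j < l0.length := by omega
    have := hc' j hj1
    simpa [List.getD_eq_getElem, hj1, hj0] using this
  have hf0 : f 0 = b := by
    have hnl : n < l0.length := by omega
    have : f 0 = l0.getD n a := by simp [hf]
    rw [this, List.getD_eq_getElem l0 a hnl, ← hlast, List.getLast_eq_getElem]
    rfl
  have hfn : f n = a := by
    show l0.getD (n - n) a = a
    rw [Nat.sub_self]
    rfl
  have hchain' : ∀ i, i < n → R (f i) (f (i + 1)) := by
    intro i hi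
    obtain ⟨j, hj⟩ : ∃ j, n - i = j + 1 := ⟨n - i - 1, by omega⟩
    have e2 : n - (i + 1) = j := by omega
    show R (l0.getD (n - i) a) (l0.getD (n - (i + 1)) a)
    rw [hj, e2]
    exact hstep j (by omega)
  have := hl n f hchain' (by rw [hf0, hfn]; exact hab)
  rwa [hf0, hfn] at this

end Aux

/-- for a loop-cumulative relation, the transitive closure
of the canonical preference relation is irreflexive, hence a strict
partial order, and (S,l,≺⁺) is a conceptual cumulative ordered model. -/
theorem canonical_transitive_closure_ordered (R : Fm → Fm → Prop)
    (h : IsCumulative R) (hl : LoopClosed R) :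
    Irreflexive (Relation.TransGen (canonicalFrame R).prec) ∧
    Transitive (Relation.TransGen (canonicalFrame R).prec) ∧
    ((canonicalFrame R).withPrec
      (Relation.TransGen (canonicalFrame R).prec)).IsCumulativeModel := by
  classical
  have hirr : Irreflexive (Relation.TransGen (canonicalFrame R).prec) := by
    intro s hs
    obtain ⟨u, hsu, hus⟩ := (Relation.TransGen.head'_iff).mp hs
    obtain ⟨φ, ψ, hsval, huval, hR⟩ := prec_reps h hsu
    obtain ⟨γ, huval', hch⟩ := back_chain h hus φ hsval
    obtain ⟨x, y⟩ := cls_eq_elim h (huval ▸ huval' : cls R ψ = cls R γ)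
    have hγφ : R γ φ := recip h x y hR
    have hφγ : R φ γ := loop_flip hl hch hγφ
    refine hsu.2 (Subtype.ext ?_)
    rw [hsval, huval, cls_eq_of h hφγ hγφ, ← huval, huval']
  have hmin : ∀ φ : Fm, MinimalIn (Relation.TransGen (canonicalFrame R).prec)
      ((canonicalFrame R).hat φ) (canonicalState R φ) := by
    intro φ
    constructor
    · exact (stateSat_iff h (rfl : (canonicalState R φ).val = cls R φ) φ).mpr (h.refl φ)
    · intro u hu htg
      obtain ⟨γ, huval, hch⟩ := back_chain h htg.to_reflTransGen φ rfl
      have hγφ : R γ φ := (stateSat_iff h huval φ).mp hu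
      have hφγ : R φ γ := loop_flip hl hch hγφ
      have heq : u = canonicalState R φ := by
        apply Subtype.ext
        rw [huval]
        exact (cls_eq_of h hφγ hγφ).symm
      exact hirr _ (heq ▸ htg)
  refine ⟨hirr, fun a b c hab hbc => hab.trans hbc, ?_⟩
  intro φ t ht
  by_cases he : t = canonicalState R φ
  · left
    exact he ▸ hmin φ
  · right
    obtain ⟨ψ, hψ⟩ := t.prop
    have hRψφ : R ψ φ := (stateSat_iff h hψ φ).mp ht
    refine ⟨canonicalState R φ, hmin φ, Relation.TransGen.single ?_⟩
    exact ⟨⟨φ, mem_cls_self h φ, ψ, by rw [hψ]; exact mem_cls_self h ψ, hRψφ⟩,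
      fun hc => he hc.symm⟩

end DR
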